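/- Assume 𝒞 is Fatou closed and let λ ≥ 0. (i) For every probability measure P on (Ω, ℱ) vanishing on all 𝒫-polar sets, j_P(𝒞_λ) is closed in the topology σ(L^∞(P), L^1(P)). (ii) For every family 𝒫' of probability measures, each absolutely continuous with respect to some member of 𝒫, the set ⋂_{P ∈ 𝒫'} {X ∈ L^W : X = X' P-a.s. for some X' ∈ 𝒞_λ} is closed in the initial topology on L^W generated by the maps X ↦ ∫ X dP, P ∈ 𝒫_W. -/

import Mathlib

open MeasureTheory Filter Topology

namespace Paper

variable {Ω : Type*} [MeasurableSpace Ω]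

/-- `N` is a `Ps`-polar set: it is contained in a measurable set which is null
for every measure in `Ps`. -/
def Polar (Ps : Set (Measure Ω)) (N : Set Ω) : Prop :=
  ∃ N' : Set Ω, MeasurableSet N' ∧ N ⊆ N' ∧ ∀ P ∈ Ps, P N' = 0

/-- `X ≤ Y` holds `Ps`-quasi surely. -/
def LeQS (Ps : Set (Measure Ω)) (X Y : Ω → ℝ) : Prop :=
  Polar Ps {ω | ¬ X ω ≤ Y ω}

/-- `X = Y` holds `Ps`-quasi surely. -/
def EqQS (Ps : Set (Measure Ω)) (X Y : Ω → ℝ) : Prop :=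
  Polar Ps {ω | X ω ≠ Y ω}

/-- The set of quasi-sure bounds of `X` relative to the weight `W`:
all `m ≥ 0` such that `|X| ≤ m • W` quasi surely. -/
def Bounds (Ps : Set (Measure Ω)) (W X : Ω → ℝ) : Set ℝ :=
  {m | 0 ≤ m ∧ Polar Ps {ω | m * W ω < |X ω|}}

/-- Membership in the space `L^W`. -/
def MemLW (Ps : Set (Measure Ω)) (W X : Ω → ℝ) : Prop :=
  Measurable X ∧ (Bounds Ps W X).Nonempty

/-- The norm `‖X‖_W` (for `W = 1` this is the quasi-sure sup-norm `‖·‖_{Ps,∞}`). -/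
noncomputable def normW (Ps : Set (Measure Ω)) (W X : Ω → ℝ) : ℝ :=
  sInf (Bounds Ps W X)

/-- `Kc` is a convex cone of measurable functions containing `0`. -/
def IsConvexCone (Kc : Set (Ω → ℝ)) : Prop :=
  (∀ k ∈ Kc, Measurable k) ∧ (fun _ => (0 : ℝ)) ∈ Kc ∧
  (∀ k ∈ Kc, ∀ c : ℝ, 0 ≤ c → (fun ω => c * k ω) ∈ Kc) ∧
  (∀ k₁ ∈ Kc, ∀ k₂ ∈ Kc, (fun ω => k₁ ω + k₂ ω) ∈ Kc)

/-- `Kc_λ`: the elements of `Kc` bounded below by `-λ • W` quasi surely. -/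
def Klam (Ps : Set (Measure Ω)) (W : Ω → ℝ) (Kc : Set (Ω → ℝ)) (l : ℝ) : Set (Ω → ℝ) :=
  {k ∈ Kc | LeQS Ps (fun ω => -l * W ω) k}

/-- The cone `𝒞` of claims super-replicable at zero cost. -/
def coneC (Ps : Set (Measure Ω)) (W : Ω → ℝ) (Kc : Set (Ω → ℝ)) : Set (Ω → ℝ) :=
  {X | MemLW Ps W X ∧ ∃ k ∈ Kc, LeQS Ps X k}

/-- The set `𝒞_λ`. -/
def coneCLam (Ps : Set (Measure Ω)) (W : Ω → ℝ) (Kc : Set (Ω → ℝ)) (l : ℝ) : Set (Ω → ℝ) :=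
  {X | MemLW Ps W X ∧ ∃ k ∈ Klam Ps W Kc l, LeQS Ps X k}

/-- The sensitive cone `𝒞̃`. -/
def coneCTilde (Ps : Set (Measure Ω)) (W : Ω → ℝ) (Kc : Set (Ω → ℝ)) : Set (Ω → ℝ) :=
  {X | MemLW Ps W X ∧ ∀ P ∈ Ps, ∃ k ∈ Kc, ∀ᵐ ω ∂P, X ω ≤ k ω}

/-- The sensitive set `𝒞̃_λ`. -/
def coneCTildeLam (Ps : Set (Measure Ω)) (W : Ω → ℝ) (Kc : Set (Ω → ℝ)) (l : ℝ) :
    Set (Ω → ℝ) :=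
  {X | MemLW Ps W X ∧ ∀ P ∈ Ps, ∃ k ∈ Klam Ps W Kc l, ∀ᵐ ω ∂P, X ω ≤ k ω}

/-- `𝒞̂ = ⋃_{λ ≥ 0} 𝒞̃_λ`. -/
def coneCHat (Ps : Set (Measure Ω)) (W : Ω → ℝ) (Kc : Set (Ω → ℝ)) : Set (Ω → ℝ) :=
  ⋃ l ∈ {r : ℝ | 0 ≤ r}, coneCTildeLam Ps W Kc l

/-- A set `A ⊆ L^W` is Fatou closed: it is stable under quasi-sure limits of
`‖·‖_W`-bounded sequences. -/
def FatouClosed (Ps : Set (Measure Ω)) (W : Ω → ℝ) (A : Set (Ω → ℝ)) : Prop :=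
  ∀ X : ℕ → Ω → ℝ, (∀ n, X n ∈ A) → (∃ m : ℝ, ∀ n, m ∈ Bounds Ps W (X n)) →
    ∀ Y : Ω → ℝ, MemLW Ps W Y →
      Polar Ps {ω | ¬ Tendsto (fun n => X n ω) atTop (nhds (Y ω))} → Y ∈ A

/-- Bounded measurable real-valued function. -/
def BddMeas (X : Ω → ℝ) : Prop := Measurable X ∧ ∃ c : ℝ, ∀ ω, |X ω| ≤ c

/-- sensitive No Free Lunch with Vanishing Risk: any quasi-surely nonnegative
bounded measurable `ξ` which is a `‖·‖_{Ps,∞}`-limit of elements of `𝒞̃ ∩ L^∞`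
vanishes quasi surely. -/
def sNFLVR (Ps : Set (Measure Ω)) (W : Ω → ℝ) (Kc : Set (Ω → ℝ)) : Prop :=
  ∀ ξ : Ω → ℝ, BddMeas ξ → LeQS Ps (fun _ => 0) ξ →
    (∃ X : ℕ → Ω → ℝ,
      (∀ n, X n ∈ coneCTilde Ps W Kc ∧ MemLW Ps (fun _ => 1) (X n)) ∧
      Tendsto (fun n => normW Ps (fun _ => 1) (fun ω => X n ω - ξ ω)) atTop (nhds 0)) →
    EqQS Ps ξ (fun _ => 0)

/-- No Arbitrage for the cone `Kc`. -/
def NA (Ps : Set (Measure Ω)) (Kc : Set (Ω → ℝ)) : Prop :=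
  ∀ k ∈ Kc, LeQS Ps (fun _ => 0) k → EqQS Ps k (fun _ => 0)

/-- `Ps_W`: probability measures dominated by some member of `Ps` and integrating `W`. -/
def PW (Ps : Set (Measure Ω)) (W : Ω → ℝ) : Set (Measure Ω) :=
  {Q | IsProbabilityMeasure Q ∧ (∃ P ∈ Ps, Q ≪ P) ∧ Integrable W Q}

/-- An approximate separating class `(Q_n)_{n ≥ 1}`. -/
def ApproxSep (Ps : Set (Measure Ω)) (W : Ω → ℝ) (Kc : Set (Ω → ℝ))
    (Q : ℕ → Measure Ω) : Prop :=
  (∀ n : ℕ, 1 ≤ n → Q n ∈ PW Ps W) ∧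
  (∃ Pbar ∈ Ps, ∀ n : ℕ, 1 ≤ n → Q n ≪ Pbar) ∧
  (∀ n : ℕ, 1 ≤ n → ∀ X ∈ coneCLam Ps W Kc (n : ℝ), ∫ ω, X ω ∂(Q n) ≤ 1 / (n : ℝ))

/-- `Q_app ≈ Ps` : the approximate separating classes and `Ps` share the same
polar sets. -/
def QappEquivP (Ps : Set (Measure Ω)) (W : Ω → ℝ) (Kc : Set (Ω → ℝ)) : Prop :=
  ∀ A : Set Ω, MeasurableSet A →
    ((∀ Q : ℕ → Measure Ω, ApproxSep Ps W Kc Q → ∀ n : ℕ, 1 ≤ n → Q n A = 0) ↔ Polar Ps A)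

/-- The superhedging-type functional `ρ_A`, with values in `EReal` and the
convention `inf ∅ = +∞`. -/
noncomputable def rho (A : Set (Ω → ℝ)) (X : Ω → ℝ) : EReal :=
  sInf {y : EReal | ∃ x : ℝ, y = (x : EReal) ∧ (fun ω => X ω - x) ∈ A}

end Paper
namespace Paper

variable {Ω : Type*} [MeasurableSpace Ω] {Ps : Set (Measure Ω)} {W : Ω → ℝ}

lemma polar_empty (Ps : Set (Measure Ω)) : Polar Ps (∅ : Set Ω) :=
  ⟨∅, MeasurableSet.empty, subset_rfl, fun _ _ => measure_empty⟩

lemma Polar.mono {N M : Set Ω} (h : Polar Ps M) (hsub : N ⊆ M) : Polar Ps N := by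
  obtain ⟨N', hmeas, hMN, hnull⟩ := h
  exact ⟨N', hmeas, hsub.trans hMN, hnull⟩

lemma Polar.union {N M : Set Ω} (hN : Polar Ps N) (hM : Polar Ps M) : Polar Ps (N ∪ M) := by
  obtain ⟨N', hm1, hs1, h01⟩ := hN
  obtain ⟨M', hm2, hs2, h02⟩ := hM
  refine ⟨N' ∪ M', hm1.union hm2, Set.union_subset_union hs1 hs2, fun P hP => ?_⟩
  exact le_antisymm ((measure_union_le _ _).trans (by simp [h01 P hP, h02 P hP])) zero_le

lemma polar_of_subset_pointwise {p : Ω → Prop} {M : Set Ω} (h : Polar Ps M)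
    (hp : ∀ ω, ω ∉ M → p ω) : Polar Ps {ω | ¬ p ω} :=
  h.mono fun ω hω => by by_contra hM; exact hω (hp ω hM)

/-- For a measure `P` vanishing on polar sets, a polar set is `P`-a.e. avoided. -/
lemma Polar.ae_notMem {P : Measure Ω}
    (hP : ∀ N : Set Ω, MeasurableSet N → Polar Ps N → P N = 0)
    {S : Set Ω} (h : Polar Ps S) : ∀ᵐ ω ∂P, ω ∉ S := by
  obtain ⟨N', hmeas, hsub, hnull⟩ := h
  have hN' : P N' = 0 := hP N' hmeas ⟨N', hmeas, subset_rfl, hnull⟩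
  have : P S = 0 := measure_mono_null hsub hN'
  exact (MeasureTheory.measure_eq_zero_iff_ae_notMem.mp this)

lemma LeQS.ae {P : Measure Ω}
    (hP : ∀ N : Set Ω, MeasurableSet N → Polar Ps N → P N = 0)
    {X Y : Ω → ℝ} (h : LeQS Ps X Y) : ∀ᵐ ω ∂P, X ω ≤ Y ω := by
  filter_upwards [h.ae_notMem hP] with ω hω
  simpa using hω

end Paper
namespace Paper

variable {Ω : Type*} [MeasurableSpace Ω] {Ps : Set (Measure Ω)} {W : Ω → ℝ}
  {Kc : Set (Ω → ℝ)} {l : ℝ}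

lemma memLW_of_pointwise_bound {X : Ω → ℝ} (hX : Measurable X) {m : ℝ} (hm : 0 ≤ m)
    (h : ∀ ω, |X ω| ≤ m * W ω) : MemLW Ps W X := by
  refine ⟨hX, m, hm, (polar_empty Ps).mono ?_⟩
  intro ω hω
  exact absurd (h ω) (by simpa using hω)

lemma Bounds.ae_le {P : Measure Ω}
    (hP : ∀ N : Set Ω, MeasurableSet N → Polar Ps N → P N = 0)
    {X : Ω → ℝ} {m : ℝ} (hm : m ∈ Bounds Ps W X) : ∀ᵐ ω ∂P, |X ω| ≤ m * W ω := by
  filter_upwards [hm.2.ae_notMem hP] with ω hω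
  simpa using not_lt.mp (by simpa using hω)

/-- Convex combinations stay in `𝒞_λ`. -/
lemma coneCLam_convex (hKc : IsConvexCone Kc)
    {X₁ X₂ : Ω → ℝ} (h₁ : X₁ ∈ coneCLam Ps W Kc l) (h₂ : X₂ ∈ coneCLam Ps W Kc l)
    {a b : ℝ} (ha : 0 ≤ a) (hb : 0 ≤ b) (hab : a + b = 1) :
    (fun ω => a * X₁ ω + b * X₂ ω) ∈ coneCLam Ps W Kc l := by
  obtain ⟨⟨hX₁m, m₁, hm₁0, hm₁⟩, k₁, ⟨hk₁Kc, hk₁l⟩, hXk₁⟩ := h₁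
  obtain ⟨⟨hX₂m, m₂, hm₂0, hm₂⟩, k₂, ⟨hk₂Kc, hk₂l⟩, hXk₂⟩ := h₂
  refine ⟨⟨(hX₁m.const_mul a).add (hX₂m.const_mul b), a * m₁ + b * m₂,
      by positivity, ?_⟩, fun ω => a * k₁ ω + b * k₂ ω,
      ⟨hKc.2.2.2 _ (hKc.2.2.1 _ hk₁Kc a ha) _ (hKc.2.2.1 _ hk₂Kc b hb), ?_⟩, ?_⟩
  · refine (hm₁.union hm₂).mono ?_
    intro ω hω
    by_contra hc
    simp only [Set.mem_union, Set.mem_setOf_eq, not_or, not_lt] at hc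
    refine absurd ?_ (not_le.mpr (Set.mem_setOf_eq ▸ hω))
    calc |a * X₁ ω + b * X₂ ω| ≤ a * |X₁ ω| + b * |X₂ ω| := by
          refine (abs_add_le _ _).trans ?_
          simp [abs_mul, abs_of_nonneg ha, abs_of_nonneg hb]
      _ ≤ a * (m₁ * W ω) + b * (m₂ * W ω) := by
          gcongr
          · exact hc.1
          · exact hc.2
      _ = (a * m₁ + b * m₂) * W ω := by ring
  · refine (hk₁l.union hk₂l).mono ?_
    intro ω hω
    by_contra hc
    simp only [LeQS, Set.mem_union, Set.mem_setOf_eq, not_or, not_not] at hc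
    refine absurd ?_ (Set.mem_setOf_eq ▸ hω)
    calc -l * W ω = a * (-l * W ω) + b * (-l * W ω) := by rw [← add_mul, hab]; ring
      _ ≤ a * k₁ ω + b * k₂ ω := by gcongr; exacts [hc.1, hc.2]
  · refine (hXk₁.union hXk₂).mono ?_
    intro ω hω
    by_contra hc
    simp only [LeQS, Set.mem_union, Set.mem_setOf_eq, not_or, not_not] at hc
    exact hω (add_le_add (mul_le_mul_of_nonneg_left hc.1 ha)
      (mul_le_mul_of_nonneg_left hc.2 hb))

end Paper
namespace Paper

variable {Ω : Type*} [MeasurableSpace Ω] {Ps : Set (Measure Ω)} {W : Ω → ℝ}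
  {Kc : Set (Ω → ℝ)} {l : ℝ}

lemma bounds_of_pointwise {X : Ω → ℝ} {m : ℝ} (hm : 0 ≤ m)
    (h : ∀ ω, |X ω| ≤ m * W ω) : m ∈ Bounds Ps W X := by
  refine ⟨hm, (polar_empty Ps).mono ?_⟩
  intro ω hω
  exact absurd (h ω) (by simpa using hω)

/-- Fatou-type closedness of `𝒞_λ` under `P`-a.e. convergence of the ratios. -/
lemma fatouStep (hW1 : ∀ ω, 1 ≤ W ω) (hWmeas : Measurable W)
    (hFatou : FatouClosed Ps W (coneC Ps W Kc)) (hl : 0 ≤ l)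
    {P : Measure Ω}
    (hP : ∀ N : Set Ω, MeasurableSet N → Polar Ps N → P N = 0)
    {Y : Ω → ℝ} (hYmeas : Measurable Y) {cY : ℝ} (hYbd : ∀ᵐ ω ∂P, |Y ω| ≤ cY)
    {X : ℕ → Ω → ℝ} (hX : ∀ n, X n ∈ coneCLam Ps W Kc l)
    (hconv : ∀ᵐ ω ∂P, Tendsto (fun n => X n ω / W ω) atTop (𝓝 (Y ω))) :
    ∃ X ∈ coneCLam Ps W Kc l, Y =ᵐ[P] fun ω => X ω / W ω := by
  classical
  have hW0 : ∀ ω, 0 < W ω := fun ω => lt_of_lt_of_le one_pos (hW1 ω)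
  set c : ℝ := max l (max cY 0) with hc
  have hlc : l ≤ c := le_max_left _ _
  have hcYc : cY ≤ c := (le_max_left _ _).trans (le_max_right _ _)
  have hc0 : 0 ≤ c := (le_max_right _ _).trans (le_max_right _ _)
  set A : Set Ω := {ω | Tendsto (fun n => X n ω / W ω) atTop (𝓝 (Y ω))} ∩
    {ω | |Y ω| ≤ cY} with hA
  have hXmeas : ∀ n, Measurable (X n) := fun n => (hX n).1.1
  have hAmeas : MeasurableSet A := by
    refine MeasurableSet.inter ?_ (measurableSet_le hYmeas.abs measurable_const)
    exact measurableSet_tendsto_fun (fun n => (hXmeas n).div hWmeas) hYmeas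
  have hAae : ∀ᵐ ω ∂P, ω ∈ A := by
    filter_upwards [hconv, hYbd] with ω h1 h2 using ⟨h1, h2⟩
  -- the truncated sequence
  set V : ℕ → Ω → ℝ := fun n ω =>
    if ω ∈ A then max (min (X n ω) (c * W ω)) (-(l * W ω)) else -(l * W ω) with hV
  have hVbd : ∀ n ω, |V n ω| ≤ c * W ω := by
    intro n ω
    have h1 : -(l * W ω) ≤ c * W ω := by
      have : -(l * W ω) ≤ 0 := neg_nonpos.mpr (mul_nonneg hl (hW0 ω).le)
      exact this.trans (mul_nonneg hc0 (hW0 ω).le)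
    rw [abs_le]
    constructor
    · rw [hV]; dsimp only
      split_ifs with h
      · exact le_max_of_le_right (by linarith [mul_le_mul_of_nonneg_right hlc (hW0 ω).le])
      · linarith [mul_le_mul_of_nonneg_right hlc (hW0 ω).le]
    · rw [hV]; dsimp only
      split_ifs with h
      · exact max_le (le_trans (min_le_right _ _) le_rfl) h1
      · exact h1
  have hVmeas : ∀ n, Measurable (V n) := by
    intro n
    refine Measurable.ite hAmeas ?_ ?_
    · exact ((hXmeas n).min (hWmeas.const_mul c)).max ((hWmeas.const_mul l).neg)
    · exact (hWmeas.const_mul l).neg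
  have hVcone : ∀ n, V n ∈ coneC Ps W Kc := by
    intro n
    obtain ⟨_, k, ⟨hkKc, hkl⟩, hXk⟩ := hX n
    refine ⟨⟨hVmeas n, c, bounds_of_pointwise hc0 (hVbd n)⟩, k, hkKc, ?_⟩
    refine (hXk.union hkl).mono ?_
    intro ω hω
    by_contra hcon
    simp only [Set.mem_union, Set.mem_setOf_eq, not_or, not_not] at hcon
    refine hω ?_
    show V n ω ≤ k ω
    rw [hV]; dsimp only
    split_ifs with h
    · exact max_le ((min_le_left _ _).trans hcon.1) (by linarith [hcon.2])
    · linarith [hcon.2]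
  -- the limit function
  set Vlim : Ω → ℝ := fun ω => if ω ∈ A then W ω * max (Y ω) (-l) else -(l * W ω)
    with hVlim
  have hVtend : ∀ ω, Tendsto (fun n => V n ω) atTop (𝓝 (Vlim ω)) := by
    intro ω
    rw [hV, hVlim]; dsimp only
    split_ifs with h
    · -- ω ∈ A
      have ht : Tendsto (fun n => X n ω / W ω) atTop (𝓝 (Y ω)) := h.1
      have hWne : W ω ≠ 0 := (hW0 ω).ne'
      have heq : ∀ n, max (min (X n ω) (c * W ω)) (-(l * W ω)) =
          W ω * max (min (X n ω / W ω) c) (-l) := by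
        intro n
        rw [mul_max_of_nonneg _ _ (hW0 ω).le, mul_min_of_nonneg _ _ (hW0 ω).le]
        rw [mul_div_cancel₀ _ hWne]
        ring_nf
      simp only [heq]
      have hcont : Tendsto (fun n => W ω * max (min (X n ω / W ω) c) (-l)) atTop
          (𝓝 (W ω * max (min (Y ω) c) (-l))) := by
        exact (((continuous_const.mul ((continuous_id.min continuous_const).max
          continuous_const)).tendsto _).comp ht)
      have hYc : min (Y ω) c = Y ω := min_eq_left ((abs_le.mp h.2).2.trans hcYc)
      rwa [hYc] at hcont
    · exact tendsto_const_nhds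
  have hVlimbd : ∀ ω, |Vlim ω| ≤ c * W ω := by
    intro ω
    rw [hVlim]; dsimp only
    split_ifs with h
    · rw [abs_mul, abs_of_nonneg (hW0 ω).le]
      have h1 : |max (Y ω) (-l)| ≤ c := by
        rw [abs_le]
        constructor
        · exact le_max_of_le_right (by linarith)
        · exact max_le ((abs_le.mp h.2).2.trans hcYc) (by linarith)
      calc W ω * |max (Y ω) (-l)| ≤ W ω * c :=
            mul_le_mul_of_nonneg_left h1 (hW0 ω).le
        _ = c * W ω := mul_comm _ _
    · rw [abs_neg, abs_mul, abs_of_nonneg hl, abs_of_nonneg (hW0 ω).le]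
      exact mul_le_mul_of_nonneg_right hlc (hW0 ω).le
  have hVlimmeas : Measurable Vlim :=
    Measurable.ite hAmeas (hWmeas.mul (hYmeas.max measurable_const))
      ((hWmeas.const_mul l).neg)
  -- apply Fatou closedness
  have hVlimC : Vlim ∈ coneC Ps W Kc := by
    refine hFatou V hVcone ⟨c, fun n => bounds_of_pointwise hc0 (hVbd n)⟩ Vlim
      (memLW_of_pointwise_bound hVlimmeas hc0 hVlimbd) ?_
    refine (polar_empty Ps).mono ?_
    intro ω hω
    exact absurd (hVtend ω) (by simpa using hω)
  obtain ⟨hVlimLW, k, hkKc, hVk⟩ := hVlimC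
  have hVlimge : ∀ ω, -(l * W ω) ≤ Vlim ω := by
    intro ω
    rw [hVlim]; dsimp only
    split_ifs with h
    · calc -(l * W ω) = W ω * (-l) := by ring
        _ ≤ W ω * max (Y ω) (-l) :=
            mul_le_mul_of_nonneg_left (le_max_right _ _) (hW0 ω).le
    · exact le_refl _
  have hkl : k ∈ Klam Ps W Kc l := by
    refine ⟨hkKc, hVk.mono ?_⟩
    intro ω hω
    simp only [LeQS, Set.mem_setOf_eq] at hω ⊢
    intro hVle
    exact hω (le_trans (by simpa [neg_mul] using hVlimge ω) hVle)
  set Xstar : Ω → ℝ := fun ω => if ω ∈ A then Y ω * W ω else -(l * W ω) with hXstar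
  have hXstarle : ∀ ω, Xstar ω ≤ Vlim ω := by
    intro ω
    rw [hXstar, hVlim]; dsimp only
    split_ifs with h
    · calc Y ω * W ω = W ω * Y ω := mul_comm _ _
        _ ≤ W ω * max (Y ω) (-l) :=
            mul_le_mul_of_nonneg_left (le_max_left _ _) (hW0 ω).le
    · exact le_refl _
  have hXstarbd : ∀ ω, |Xstar ω| ≤ c * W ω := by
    intro ω
    rw [hXstar]; dsimp only
    split_ifs with h
    · rw [abs_mul, abs_of_nonneg (hW0 ω).le]
      exact mul_le_mul_of_nonneg_right (h.2.trans hcYc) (hW0 ω).le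
    · rw [abs_neg, abs_mul, abs_of_nonneg hl, abs_of_nonneg (hW0 ω).le]
      exact mul_le_mul_of_nonneg_right hlc (hW0 ω).le
  have hXstarmeas : Measurable Xstar :=
    Measurable.ite hAmeas (hYmeas.mul hWmeas) ((hWmeas.const_mul l).neg)
  refine ⟨Xstar, ⟨memLW_of_pointwise_bound hXstarmeas hc0 hXstarbd, k, hkl, ?_⟩, ?_⟩
  · refine hVk.mono ?_
    intro ω hω
    simp only [Set.mem_setOf_eq] at hω ⊢
    intro hVle
    exact hω ((hXstarle ω).trans hVle)
  · filter_upwards [hAae] with ω hωA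
    rw [hXstar]; dsimp only
    rw [if_pos hωA, mul_div_cancel_right₀ _ (hW0 ω).ne']

end Paper
namespace Paper

variable {Ω : Type*} [MeasurableSpace Ω] {Ps : Set (Measure Ω)} {W : Ω → ℝ}
  {Kc : Set (Ω → ℝ)} {l : ℝ}

open scoped RealInnerProductSpace

set_option maxHeartbeats 1000000 in
set_option synthInstance.maxHeartbeats 400000 in
lemma partI (hW1 : ∀ ω, 1 ≤ W ω) (hWmeas : Measurable W) (hKc : IsConvexCone Kc)
    (hFatou : FatouClosed Ps W (coneC Ps W Kc)) (hl : 0 ≤ l)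
    (P : Measure Ω) (hPprob : IsProbabilityMeasure P)
    (hP : ∀ N : Set Ω, MeasurableSet N → Polar Ps N → P N = 0)
    (Y : Ω → ℝ) (hYmeas : Measurable Y) (cY : ℝ) (hYbd : ∀ᵐ ω ∂P, |Y ω| ≤ cY)
    (Happrox : ∀ ε : ℝ, 0 < ε → ∀ g : Ω → ℝ, Integrable g P →
      ∃ X ∈ coneCLam Ps W Kc l, |∫ ω, (X ω / W ω - Y ω) * g ω ∂P| < ε) :
    ∃ X ∈ coneCLam Ps W Kc l, Y =ᵐ[P] fun ω => X ω / W ω := by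
  haveI := hPprob
  have hW0 : ∀ ω, 0 < W ω := fun ω => lt_of_lt_of_le one_pos (hW1 ω)
  -- ratios of elements of the cone are a.e. bounded
  have hratio : ∀ X ∈ coneCLam Ps W Kc l, ∃ m : ℝ,
      ∀ᵐ ω ∂P, |X ω / W ω| ≤ m := by
    intro X hX
    obtain ⟨-, m, hm⟩ := hX.1
    refine ⟨m, ?_⟩
    filter_upwards [Bounds.ae_le hP hm] with ω hω
    rw [abs_div, abs_of_pos (hW0 ω), div_le_iff₀ (hW0 ω)]
    linarith [hω]
  have hmemXdiv : ∀ X ∈ coneCLam Ps W Kc l,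
      MeasureTheory.MemLp (fun ω => X ω / W ω) 2 P := by
    intro X hX
    obtain ⟨m, hm⟩ := hratio X hX
    exact MeasureTheory.MemLp.of_bound (hX.1.1.div hWmeas).aestronglyMeasurable m
      (by filter_upwards [hm] with ω h using by rw [Real.norm_eq_abs]; exact h)
  have hmemY : MeasureTheory.MemLp Y 2 P :=
    MeasureTheory.MemLp.of_bound hYmeas.aestronglyMeasurable cY
      (by filter_upwards [hYbd] with ω h using by simpa [Real.norm_eq_abs] using h)
  set S₀ : Set (Lp ℝ 2 P) :=
    {f | ∃ X ∈ coneCLam Ps W Kc l, (f : Ω → ℝ) =ᵐ[P] fun ω => X ω / W ω} with hS₀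
  have hS₀conv : Convex ℝ S₀ := by
    intro f hf g hg a b ha hb hab
    obtain ⟨X₁, hX₁, hfe⟩ := hf
    obtain ⟨X₂, hX₂, hge⟩ := hg
    refine ⟨fun ω => a * X₁ ω + b * X₂ ω, coneCLam_convex hKc hX₁ hX₂ ha hb hab, ?_⟩
    filter_upwards [hfe, hge, MeasureTheory.Lp.coeFn_add (a • f) (b • g),
      MeasureTheory.Lp.coeFn_smul a f, MeasureTheory.Lp.coeFn_smul b g] with ω h1 h2 h3 h4 h5
    simp only [h3, Pi.add_apply, h4, h5, Pi.smul_apply, smul_eq_mul, h1, h2]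
    rw [add_div]
    ring_nf
  set y : Lp ℝ 2 P := hmemY.toLp Y with hy0
  have hyclos : y ∈ closure S₀ := by
    by_contra hy
    obtain ⟨f, u, hfu, huy⟩ :=
      geometric_hahn_banach_closed_point hS₀conv.closure isClosed_closure hy
    set g₀ := (InnerProductSpace.toDual ℝ (Lp ℝ 2 P)).symm f with hg₀
    have hfapp : ∀ z : Lp ℝ 2 P, f z = ⟪g₀, z⟫ := by
      intro z
      rw [hg₀]
      rw [← InnerProductSpace.toDual_apply_apply]
      simp
    have hgint : MeasureTheory.Integrable (g₀ : Ω → ℝ) P :=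
      (MeasureTheory.Lp.memLp g₀).integrable (by norm_num)
    have hgmeas : MeasureTheory.AEStronglyMeasurable (g₀ : Ω → ℝ) P :=
      (MeasureTheory.Lp.memLp g₀).aestronglyMeasurable
    set ε := f y - u with hε0
    have hε : 0 < ε := sub_pos.mpr huy
    obtain ⟨X, hXmem, hXlt⟩ := Happrox ε hε _ hgint
    set fx : Lp ℝ 2 P := (hmemXdiv X hXmem).toLp _ with hfx
    have hfxS : fx ∈ S₀ := ⟨X, hXmem, MeasureTheory.MemLp.coeFn_toLp _⟩
    have hflt : f fx < u := hfu _ (subset_closure hfxS)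
    -- compute the two inner products as integrals
    have hcompute : ∀ (h : Ω → ℝ) (hh : MeasureTheory.MemLp h 2 P),
        ⟪g₀, hh.toLp h⟫ = ∫ ω, (g₀ : Ω → ℝ) ω * h ω ∂P := by
      intro h hh
      rw [MeasureTheory.L2.inner_def]
      refine MeasureTheory.integral_congr_ae ?_
      filter_upwards [hh.coeFn_toLp] with ω hω
      rw [hω]
      simp [RCLike.inner_apply, starRingEnd_apply, mul_comm]
    have h1 : f y = ∫ ω, (g₀ : Ω → ℝ) ω * Y ω ∂P := by rw [hfapp, hy0, hcompute]
    have h2 : f fx = ∫ ω, (g₀ : Ω → ℝ) ω * (X ω / W ω) ∂P := by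
      rw [hfapp, hfx, hcompute]
    -- integrability of the products
    obtain ⟨m, hm⟩ := hratio X hXmem
    have hint1 : MeasureTheory.Integrable (fun ω => (X ω / W ω) * (g₀ : Ω → ℝ) ω) P :=
      hgint.bdd_mul ((hXmem.1.1.div hWmeas).aestronglyMeasurable)
        (by filter_upwards [hm] with ω h using by rw [Real.norm_eq_abs]; exact h)
    have hint2 : MeasureTheory.Integrable (fun ω => Y ω * (g₀ : Ω → ℝ) ω) P :=
      hgint.bdd_mul hYmeas.aestronglyMeasurable
        (by filter_upwards [hYbd] with ω h using by simpa [Real.norm_eq_abs] using h)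
    have hsub : ∫ ω, (X ω / W ω - Y ω) * (g₀ : Ω → ℝ) ω ∂P = f fx - f y := by
      rw [h1, h2]
      rw [show (fun ω => (X ω / W ω - Y ω) * (g₀ : Ω → ℝ) ω) =
        (fun ω => (X ω / W ω) * (g₀ : Ω → ℝ) ω - Y ω * (g₀ : Ω → ℝ) ω) by
          funext ω; ring]
      rw [MeasureTheory.integral_sub hint1 hint2]
      congr 1 <;> · refine MeasureTheory.integral_congr_ae ?_
                    filter_upwards with ω using mul_comm _ _
    rw [hsub] at hXlt
    have h3 : f fx - f y < -ε := by rw [hε0]; linarith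
    have h4 := (abs_lt.mp hXlt).1
    linarith
  -- extract a sequence converging in L², then a.e. along a subsequence
  obtain ⟨xs, hxsS, hxs⟩ := mem_closure_iff_seq_limit.mp hyclos
  choose Xs hXsmem hXsae using hxsS
  have htim : MeasureTheory.TendstoInMeasure P (fun n => (xs n : Ω → ℝ)) atTop
      (y : Ω → ℝ) := MeasureTheory.tendstoInMeasure_of_tendsto_Lp hxs
  obtain ⟨ns, hnsmono, hae⟩ := htim.exists_seq_tendsto_ae
  have hconv : ∀ᵐ ω ∂P, Tendsto (fun i => Xs (ns i) ω / W ω) atTop (𝓝 (Y ω)) := by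
    have hall : ∀ᵐ ω ∂P, ∀ n, (xs n : Ω → ℝ) ω = Xs n ω / W ω :=
      MeasureTheory.ae_all_iff.mpr fun n => hXsae n
    filter_upwards [hae, hall, hmemY.coeFn_toLp] with ω h1 h2 h3
    have : (fun i => Xs (ns i) ω / W ω) = fun i => (xs (ns i) : Ω → ℝ) ω := by
      funext i; rw [h2 (ns i)]
    rw [this, ← h3]
    exact h1
  exact fatouStep hW1 hWmeas hFatou hl hP hYmeas hYbd (fun i => hXsmem (ns i)) hconv

end Paper
namespace Paper
open scoped ENNReal NNReal

variable {Ω : Type*} [MeasurableSpace Ω] {Ps : Set (Measure Ω)} {W : Ω → ℝ}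
  {Kc : Set (Ω → ℝ)} {l : ℝ}

lemma density_integral (P : Measure Ω) {d : Ω → ℝ} (hd : Measurable d)
    (hd0 : ∀ ω, 0 ≤ d ω) (F : Ω → ℝ) :
    ∫ ω, F ω ∂(P.withDensity (fun ω => ((d ω).toNNReal : ℝ≥0∞))) =
      ∫ ω, d ω * F ω ∂P := by
  rw [integral_withDensity_eq_integral_smul hd.real_toNNReal F]
  congr 1
  funext ω
  rw [NNReal.smul_def, Real.coe_toNNReal _ (hd0 ω), smul_eq_mul]

lemma density_isProbability (P : Measure Ω) [MeasureTheory.IsProbabilityMeasure P]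
    {d : Ω → ℝ} (hd : Measurable d) (hd0 : ∀ ω, 0 ≤ d ω)
    (hint : MeasureTheory.Integrable d P) (h1 : ∫ ω, d ω ∂P = 1) :
    MeasureTheory.IsProbabilityMeasure
      (P.withDensity (fun ω => ((d ω).toNNReal : ℝ≥0∞))) := by
  constructor
  rw [MeasureTheory.withDensity_apply _ MeasurableSet.univ]
  rw [MeasureTheory.setLIntegral_univ]
  have : ∀ ω, ((d ω).toNNReal : ℝ≥0∞) = ENNReal.ofReal (d ω) := fun ω => rfl
  simp_rw [this]
  rw [← MeasureTheory.ofReal_integral_eq_lintegral_ofReal hint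
    (Filter.Eventually.of_forall hd0)]
  rw [h1]
  simp

end Paper
namespace Paper
open scoped ENNReal NNReal

variable {Ω : Type*} [MeasurableSpace Ω] {Ps : Set (Measure Ω)} {W : Ω → ℝ}
  {Kc : Set (Ω → ℝ)} {l : ℝ}

set_option maxHeartbeats 1000000 in
lemma partII (hW1 : ∀ ω, 1 ≤ W ω) (hWmeas : Measurable W) (hKc : IsConvexCone Kc)
    (hFatou : FatouClosed Ps W (coneC Ps W Kc)) (hl : 0 ≤ l)
    {Ps' : Set (Measure Ω)}
    (hPs' : ∀ P ∈ Ps', MeasureTheory.IsProbabilityMeasure P ∧ ∃ P'' ∈ Ps, P ≪ P'')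
    {Y : Ω → ℝ} (hY : MemLW Ps W Y)
    (H2 : ∀ ε : ℝ, 0 < ε → ∀ (k : ℕ) (Q : Fin k → Measure Ω), (∀ i, Q i ∈ PW Ps W) →
      ∃ X : Ω → ℝ,
        (MemLW Ps W X ∧ ∀ P ∈ Ps', ∃ X' ∈ coneCLam Ps W Kc l, X =ᵐ[P] X') ∧
        ∀ i, |∫ ω, X ω ∂(Q i) - ∫ ω, Y ω ∂(Q i)| < ε)
    {P : Measure Ω} (hPmem : P ∈ Ps') :
    ∃ X' ∈ coneCLam Ps W Kc l, Y =ᵐ[P] X' := by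
  obtain ⟨hPprob, P'', hP''mem, hPac⟩ := hPs' P hPmem
  haveI := hPprob
  have hW0 : ∀ ω, 0 < W ω := fun ω => lt_of_lt_of_le one_pos (hW1 ω)
  have hPvanish : ∀ N : Set Ω, MeasurableSet N → Polar Ps N → P N = 0 := by
    intro N hN ⟨N', hm, hsub, hnull⟩
    exact measure_mono_null hsub (hPac (hnull _ hP''mem))
  obtain ⟨hYmeas, mY, hmY⟩ := hY
  have hYame : ∀ᵐ ω ∂P, |Y ω| ≤ mY * W ω := Bounds.ae_le hPvanish hmY
  have hYtbd : ∀ᵐ ω ∂P, |Y ω / W ω| ≤ mY := by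
    filter_upwards [hYame] with ω hω
    rw [abs_div, abs_of_pos (hW0 ω), div_le_iff₀ (hW0 ω)]
    linarith
  -- the key approximation property for `partI`
  have Happrox : ∀ ε : ℝ, 0 < ε → ∀ g : Ω → ℝ, MeasureTheory.Integrable g P →
      ∃ X ∈ coneCLam Ps W Kc l,
        |∫ ω, (X ω / W ω - Y ω / W ω) * g ω ∂P| < ε := by
    intro ε hε g hgint0
    -- replace `g` by a measurable representative
    set g' : Ω → ℝ := (hgint0.1.aemeasurable.mk g) with hg'def
    have hg'meas : Measurable g' := hgint0.1.aemeasurable.measurable_mk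
    have hgg' : g =ᵐ[P] g' := hgint0.1.aemeasurable.ae_eq_mk
    have hg'int : MeasureTheory.Integrable g' P := hgint0.congr hgg'
    suffices h : ∃ X ∈ coneCLam Ps W Kc l,
        |∫ ω, (X ω / W ω - Y ω / W ω) * g' ω ∂P| < ε by
      obtain ⟨X, hX, hXlt⟩ := h
      refine ⟨X, hX, ?_⟩
      rwa [show ∫ ω, (X ω / W ω - Y ω / W ω) * g ω ∂P =
          ∫ ω, (X ω / W ω - Y ω / W ω) * g' ω ∂P from
        MeasureTheory.integral_congr_ae (by filter_upwards [hgg'] with ω h using by rw [h])]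
    -- positive and negative parts, shifted by 1
    set hp : Ω → ℝ := fun ω => max (g' ω) 0 + 1 with hhp
    set hm : Ω → ℝ := fun ω => max (-g' ω) 0 + 1 with hhm
    have hp0 : ∀ ω, 0 ≤ hp ω := fun ω => by positivity
    have hm0 : ∀ ω, 0 ≤ hm ω := fun ω => by positivity
    have hpmeas : Measurable hp := (hg'meas.max measurable_const).add_const 1
    have hmmeas : Measurable hm := (hg'meas.neg.max measurable_const).add_const 1
    have hpint : MeasureTheory.Integrable hp P :=
      hg'int.pos_part.add (MeasureTheory.integrable_const 1)
    have hmint : MeasureTheory.Integrable hm P :=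
      hg'int.neg.pos_part.add (MeasureTheory.integrable_const 1)
    have hpm : ∀ ω, hp ω - hm ω = g' ω := fun ω => by
      simp only [hhp, hhm]
      have := max_zero_sub_max_neg_zero_eq_self (g' ω)
      linarith
    -- the densities
    have hWinvbd : ∀ ω, ‖(W ω)⁻¹‖ ≤ 1 := by
      intro ω
      rw [Real.norm_eq_abs, abs_of_pos (inv_pos.mpr (hW0 ω))]
      exact inv_le_one_of_one_le₀ (hW1 ω)
    have hdivint : ∀ h₀ : Ω → ℝ, Measurable h₀ → MeasureTheory.Integrable h₀ P →
        MeasureTheory.Integrable (fun ω => h₀ ω / W ω) P := by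
      intro h₀ hmeas hint
      have : MeasureTheory.Integrable (fun ω => (W ω)⁻¹ * h₀ ω) P :=
        hint.bdd_mul (hWmeas.inv.aestronglyMeasurable)
          (Filter.Eventually.of_forall hWinvbd)
      exact this.congr (Filter.Eventually.of_forall fun ω =>
        (div_eq_inv_mul _ _).symm)
    have hdpint : MeasureTheory.Integrable (fun ω => hp ω / W ω) P :=
      hdivint hp hpmeas hpint
    have hdmint : MeasureTheory.Integrable (fun ω => hm ω / W ω) P :=
      hdivint hm hmmeas hmint
    set cp : ℝ := ∫ ω, hp ω / W ω ∂P with hcp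
    set cm : ℝ := ∫ ω, hm ω / W ω ∂P with hcm
    have hdppos : ∀ ω, 0 < hp ω / W ω := by
      intro ω
      apply div_pos _ (hW0 ω)
      simp only [hhp]; positivity
    have hdmpos : ∀ ω, 0 < hm ω / W ω := by
      intro ω
      apply div_pos _ (hW0 ω)
      simp only [hhm]; positivity
    have hcppos : 0 < cp := by
      rw [hcp]
      rw [MeasureTheory.integral_pos_iff_support_of_nonneg
        (fun ω => (hdppos ω).le) hdpint]
      rw [Set.eq_univ_of_forall (fun ω => Function.mem_support.mpr (hdppos ω).ne')]
      simp
    have hcmpos : 0 < cm := by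
      rw [hcm]
      rw [MeasureTheory.integral_pos_iff_support_of_nonneg
        (fun ω => (hdmpos ω).le) hdmint]
      rw [Set.eq_univ_of_forall (fun ω => Function.mem_support.mpr (hdmpos ω).ne')]
      simp
    -- the two probability measures
    have mkQ : ∀ (h₀ : Ω → ℝ), Measurable h₀ → MeasureTheory.Integrable h₀ P →
        (∀ ω, 0 ≤ h₀ ω) → ∀ c : ℝ, 0 < c → c = ∫ ω, h₀ ω / W ω ∂P →
        ∃ Q : Measure Ω, Q ∈ PW Ps W ∧ Q ≪ P ∧
          ∀ Z : Ω → ℝ, Measurable Z →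
            MeasureTheory.Integrable (fun ω => (Z ω / W ω) * h₀ ω) P →
            ∫ ω, Z ω ∂Q = (∫ ω, (Z ω / W ω) * h₀ ω ∂P) / c := by
      intro h₀ hmeas hint h₀0 c hc hceq
      have hdint : MeasureTheory.Integrable (fun ω => h₀ ω / W ω) P :=
        hdivint h₀ hmeas hint
      set d : Ω → ℝ := fun ω => h₀ ω / W ω / c with hd
      have hd0 : ∀ ω, 0 ≤ d ω :=
        fun ω => div_nonneg (div_nonneg (h₀0 ω) (hW0 ω).le) hc.le
      have hdmeas : Measurable d := (hmeas.div hWmeas).div_const c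
      have hd1 : ∫ ω, d ω ∂P = 1 := by
        rw [hd]
        rw [MeasureTheory.integral_div]
        rw [← hceq, div_self hc.ne']
      set Q : Measure Ω := P.withDensity (fun ω => ((d ω).toNNReal : ℝ≥0∞)) with hQ
      haveI hQprob : MeasureTheory.IsProbabilityMeasure Q :=
        density_isProbability P hdmeas hd0 (hdint.div_const c) hd1
      have hQac : Q ≪ P := MeasureTheory.withDensity_absolutelyContinuous P _
      have hQint : ∀ Z : Ω → ℝ, Measurable Z →
          MeasureTheory.Integrable (fun ω => (Z ω / W ω) * h₀ ω) P →
          ∫ ω, Z ω ∂Q = (∫ ω, (Z ω / W ω) * h₀ ω ∂P) / c := by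
        intro Z hZmeas hZint
        rw [hQ, density_integral P hdmeas hd0]
        rw [show (fun ω => d ω * Z ω) = fun ω => ((Z ω / W ω) * h₀ ω) / c by
          funext ω
          rw [hd]
          field_simp]
        rw [MeasureTheory.integral_div]
      refine ⟨Q, ⟨hQprob, ⟨P'', hP''mem, hQac.trans hPac⟩, ?_⟩, hQac, hQint⟩
      -- W is integrable w.r.t. Q
      rw [hQ]
      rw [show (fun ω => ((d ω).toNNReal : ℝ≥0∞)) =
        (fun ω => ((fun ω => (d ω).toNNReal) ω : ℝ≥0∞)) from rfl]
      rw [MeasureTheory.integrable_withDensity_iff_integrable_smul hdmeas.real_toNNReal]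
      refine (hint.div_const c).congr ?_
      refine Filter.Eventually.of_forall fun ω => ?_
      show h₀ ω / c = (d ω).toNNReal • W ω
      rw [NNReal.smul_def, Real.coe_toNNReal _ (hd0 ω), smul_eq_mul, hd]
      dsimp only
      rw [div_div, div_mul_eq_mul_div, mul_comm (h₀ ω) (W ω),
        mul_div_mul_left _ _ (hW0 ω).ne']
    obtain ⟨Qp, hQpPW, hQpac, hQpint⟩ := mkQ hp hpmeas hpint hp0 cp hcppos hcp
    obtain ⟨Qm, hQmPW, hQmac, hQmint⟩ := mkQ hm hmmeas hmint hm0 cm hcmpos hcm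
    -- apply the hypothesis with ε' and the pair (Qp, Qm)
    set ε' : ℝ := ε / (cp + cm) with hε'
    have hε'pos : 0 < ε' := div_pos hε (by linarith)
    obtain ⟨X, ⟨hXLW, hXPs'⟩, hXint⟩ := H2 ε' hε'pos 2 ![Qp, Qm] (by
      intro i
      fin_cases i
      · simpa using hQpPW
      · simpa using hQmPW)
    obtain ⟨X', hX'mem, hXX'⟩ := hXPs' P hPmem
    obtain ⟨hXmeas, mX, hmX⟩ := hXLW
    have hXame : ∀ᵐ ω ∂P, |X ω| ≤ mX * W ω := Bounds.ae_le hPvanish hmX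
    have hXtbd : ∀ᵐ ω ∂P, |X ω / W ω| ≤ mX := by
      filter_upwards [hXame] with ω hω
      rw [abs_div, abs_of_pos (hW0 ω), div_le_iff₀ (hW0 ω)]
      linarith
    -- integrability of all the products
    have hprod : ∀ (Z : Ω → ℝ) (mZ : ℝ), (∀ᵐ ω ∂P, |Z ω / W ω| ≤ mZ) →
        Measurable Z → ∀ h₀ : Ω → ℝ, Measurable h₀ → MeasureTheory.Integrable h₀ P →
        MeasureTheory.Integrable (fun ω => (Z ω / W ω) * h₀ ω) P := by
      intro Z mZ hZbd hZmeas h₀ h₀meas h₀int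
      exact h₀int.bdd_mul ((hZmeas.div hWmeas).aestronglyMeasurable)
        (by filter_upwards [hZbd] with ω h using by rwa [Real.norm_eq_abs])
    have hXp := hprod X mX hXtbd hXmeas hp hpmeas hpint
    have hXm := hprod X mX hXtbd hXmeas hm hmmeas hmint
    have hYp := hprod Y mY hYtbd hYmeas hp hpmeas hpint
    have hYm := hprod Y mY hYtbd hYmeas hm hmmeas hmint
    -- the integral bounds from the hypothesis
    have hb0 := hXint 0
    have hb1 := hXint 1
    simp only [Matrix.cons_val_zero, Matrix.cons_val_one, Matrix.head_cons] at hb0 hb1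
    rw [hQpint X hXmeas hXp, hQpint Y hYmeas hYp] at hb0
    rw [hQmint X hXmeas hXm, hQmint Y hYmeas hYm] at hb1
    rw [div_sub_div_same, abs_div, abs_of_pos hcppos, div_lt_iff₀ hcppos] at hb0
    rw [div_sub_div_same, abs_div, abs_of_pos hcmpos, div_lt_iff₀ hcmpos] at hb1
    -- conclude
    refine ⟨X', hX'mem, ?_⟩
    have heq1 : ∫ ω, (X' ω / W ω - Y ω / W ω) * g' ω ∂P =
        ∫ ω, (X ω / W ω - Y ω / W ω) * g' ω ∂P := by
      refine MeasureTheory.integral_congr_ae ?_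
      filter_upwards [hXX'] with ω h
      rw [h]
    have heq2 : ∫ ω, (X ω / W ω - Y ω / W ω) * g' ω ∂P =
        (∫ ω, (X ω / W ω) * hp ω ∂P - ∫ ω, (Y ω / W ω) * hp ω ∂P) -
        (∫ ω, (X ω / W ω) * hm ω ∂P - ∫ ω, (Y ω / W ω) * hm ω ∂P) := by
      have e1 : ∫ ω, (X ω / W ω - Y ω / W ω) * g' ω ∂P =
          ∫ ω, ((X ω / W ω * hp ω - Y ω / W ω * hp ω) -
            (X ω / W ω * hm ω - Y ω / W ω * hm ω)) ∂P := by
        refine MeasureTheory.integral_congr_ae (Filter.Eventually.of_forall fun ω => ?_)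
        dsimp only
        rw [← hpm ω]
        ring
      have hA : MeasureTheory.Integrable
          (fun ω => X ω / W ω * hp ω - Y ω / W ω * hp ω) P := hXp.sub hYp
      have hB : MeasureTheory.Integrable
          (fun ω => X ω / W ω * hm ω - Y ω / W ω * hm ω) P := hXm.sub hYm
      rw [e1, MeasureTheory.integral_sub hA hB,
        MeasureTheory.integral_sub hXp hYp, MeasureTheory.integral_sub hXm hYm]
    rw [heq1, heq2]
    calc |(∫ ω, (X ω / W ω) * hp ω ∂P - ∫ ω, (Y ω / W ω) * hp ω ∂P) -
        (∫ ω, (X ω / W ω) * hm ω ∂P - ∫ ω, (Y ω / W ω) * hm ω ∂P)| ≤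
        |∫ ω, (X ω / W ω) * hp ω ∂P - ∫ ω, (Y ω / W ω) * hp ω ∂P| +
        |∫ ω, (X ω / W ω) * hm ω ∂P - ∫ ω, (Y ω / W ω) * hm ω ∂P| := abs_sub _ _
      _ < ε' * cp + ε' * cm := add_lt_add hb0 hb1
      _ = ε := by rw [hε']; field_simp
  -- apply part (i)
  obtain ⟨X, hXmem, hXeq⟩ := partI hW1 hWmeas hKc hFatou hl P hPprob hPvanish
    (fun ω => Y ω / W ω) (hYmeas.div hWmeas) mY hYtbd Happrox
  refine ⟨X, hXmem, ?_⟩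
  filter_upwards [hXeq] with ω h
  have hWne : W ω ≠ 0 := (hW0 ω).ne'
  field_simp at h
  exact h

end Paper

namespace Paper

/-- **Proposition (`closed:sensitive`).** Assume `𝒞` is Fatou closed and let
`λ ≥ 0`. (i) For every probability `P` vanishing on all `𝒫`-polar sets,
`j_P(𝒞_λ)` is `σ(L^∞(P), L^1(P))`-closed. (ii) For every family `𝒫'` of
probability measures each dominated by a member of `𝒫`, the set
`⋂_{P ∈ 𝒫'} j_P⁻¹(j_P(𝒞_λ))` is closed in the initial topology on `L^W`
generated by the maps `X ↦ ∫ X dP`, `P ∈ 𝒫_W`. -/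
theorem sensitive_CLam_closed {Ω : Type*} [MeasurableSpace Ω]
    (Ps : Set (Measure Ω)) (hPsne : Ps.Nonempty)
    (hPsprob : ∀ P ∈ Ps, IsProbabilityMeasure P)
    (W : Ω → ℝ) (hWmeas : Measurable W) (hW1 : ∀ ω, 1 ≤ W ω)
    (Kc : Set (Ω → ℝ)) (hKc : IsConvexCone Kc)
    (hFatou : FatouClosed Ps W (coneC Ps W Kc))
    (l : ℝ) (hl : 0 ≤ l) :
    (∀ P : Measure Ω, IsProbabilityMeasure P →
      (∀ N : Set Ω, MeasurableSet N → Polar Ps N → P N = 0) →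
      ∀ Y : Ω → ℝ, Measurable Y → (∃ c : ℝ, ∀ᵐ ω ∂P, |Y ω| ≤ c) →
        (∀ ε : ℝ, 0 < ε → ∀ (k : ℕ) (g : Fin k → Ω → ℝ), (∀ i, Integrable (g i) P) →
          ∃ X ∈ coneCLam Ps W Kc l,
            ∀ i, |∫ ω, (X ω / W ω - Y ω) * g i ω ∂P| < ε) →
        ∃ X ∈ coneCLam Ps W Kc l, Y =ᵐ[P] fun ω => X ω / W ω) ∧
    (∀ Ps' : Set (Measure Ω),
      (∀ P ∈ Ps', IsProbabilityMeasure P ∧ ∃ P'' ∈ Ps, P ≪ P'') →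
      ∀ Y : Ω → ℝ, MemLW Ps W Y →
        (∀ ε : ℝ, 0 < ε → ∀ (k : ℕ) (Q : Fin k → Measure Ω), (∀ i, Q i ∈ PW Ps W) →
          ∃ X : Ω → ℝ,
            (MemLW Ps W X ∧ ∀ P ∈ Ps', ∃ X' ∈ coneCLam Ps W Kc l, X =ᵐ[P] X') ∧
            ∀ i, |∫ ω, X ω ∂(Q i) - ∫ ω, Y ω ∂(Q i)| < ε) →
        (MemLW Ps W Y ∧ ∀ P ∈ Ps', ∃ X' ∈ coneCLam Ps W Kc l, Y =ᵐ[P] X')) := by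
  constructor
  · intro P hPprob hPvanish Y hYmeas hYbd Happrox0
    obtain ⟨cY, hYbd'⟩ := hYbd
    refine partI hW1 hWmeas hKc hFatou hl P hPprob hPvanish Y hYmeas cY hYbd' ?_
    intro ε hε g hg
    obtain ⟨X, hXmem, hXlt⟩ := Happrox0 ε hε 1 (fun _ => g) (fun _ => hg)
    exact ⟨X, hXmem, hXlt 0⟩
  · intro Ps' hPs' Y hY H2
    exact ⟨hY, fun P hPmem => partII hW1 hWmeas hKc hFatou hl hPs' hY H2 hPmem⟩

end Paper
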